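/- arXiv:2512.12825 — 2 statements merged into one kernel-verified Lean document; each statement's English description precedes it below -/
import Mathlib

section
/- If D† generates a semigroup of unital completely positive maps, then for every operator W, D†(W)† W + W† D†(W) ≤ D†(W† W), where the inequality is in the operator order. -/
open Matrix
open scoped ComplexOrder

attribute [local instance] Matrix.linftyOpNormedAddCommGroup Matrix.linftyOpNormedRing
  Matrix.linftyOpNormedAlgebra

/-- Complete positivity: all ampliations `id_k ⊗ Φ` preserve positive semidefiniteness. -/
def IsCompletelyPositive {a b : Type*} [Fintype a] [Fintype b]
    (Φ : Matrix a a ℂ → Matrix b b ℂ) : Prop :=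
  ∀ (k : ℕ) (M : Matrix (Fin k × a) (Fin k × a) ℂ), M.PosSemidef →
    (Matrix.of fun (r s : Fin k × b) =>
      Φ (Matrix.of fun i j => M (r.1, i) (s.1, j)) r.2 s.2).PosSemidef

variable {n : ℕ}


lemma isClosed_nonnegC : IsClosed {z : ℂ | 0 ≤ z} := by
  have h : {z : ℂ | 0 ≤ z} = {z | (0:ℝ) ≤ z.re} ∩ {z | z.im = 0} := by
    ext z
    simp [Complex.le_def, eq_comm]
  rw [h]
  exact (isClosed_le continuous_const Complex.continuous_re).inter
    (isClosed_eq Complex.continuous_im continuous_const)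

noncomputable def ctCLM (n : ℕ) :
    Matrix (Fin n) (Fin n) ℂ →L[ℝ] Matrix (Fin n) (Fin n) ℂ :=
  LinearMap.toContinuousLinearMap
    { toFun := fun A => Aᴴ
      map_add' := fun A B => conjTranspose_add A B
      map_smul' := fun c A => by
        simp [conjTranspose_smul] }

noncomputable def qformLM (n : ℕ) (x : Fin n → ℂ) : Matrix (Fin n) (Fin n) ℂ →ₗ[ℂ] ℂ where
  toFun A := star x ⬝ᵥ A *ᵥ x
  map_add' A B := by simp [add_mulVec, dotProduct_add]
  map_smul' c A := by
    show star x ⬝ᵥ (c • A) *ᵥ x = c • (star x ⬝ᵥ A *ᵥ x)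
    rw [smul_mulVec, dotProduct_smul]

lemma isClosed_PSD : IsClosed {A : Matrix (Fin n) (Fin n) ℂ | A.PosSemidef} := by
  have h2 : ∀ x : Fin n → ℂ,
      Continuous fun A : Matrix (Fin n) (Fin n) ℂ => star x ⬝ᵥ A *ᵥ x := by
    intro x
    exact (qformLM n x).continuous_of_finiteDimensional
  have h : {A : Matrix (Fin n) (Fin n) ℂ | A.PosSemidef}
      = {A | Aᴴ = A} ∩ ⋂ x : Fin n → ℂ, (fun A => star x ⬝ᵥ A *ᵥ x) ⁻¹' {z | 0 ≤ z} := by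
    ext A
    simp [Matrix.posSemidef_iff_dotProduct_mulVec, Matrix.IsHermitian, Set.mem_iInter]
  rw [h]
  exact (isClosed_eq (ctCLM n).continuous continuous_id).inter
    (isClosed_iInter fun x => isClosed_nonnegC.preimage (h2 x))

lemma psd_smul_real {M : Matrix (Fin n) (Fin n) ℂ} (hM : M.PosSemidef) {c : ℝ} (hc : 0 ≤ c) :
    (c • M).PosSemidef := by
  have h : c • M = (c : ℂ) • M := by
    ext i j; simp [Complex.real_smul]
  rw [h]
  refine Matrix.PosSemidef.of_dotProduct_mulVec_nonneg ?_ fun x => ?_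
  · show ((c:ℂ) • M)ᴴ = (c:ℂ) • M
    rw [conjTranspose_smul, Complex.star_def, Complex.conj_ofReal, hM.1.eq]
  · have := hM.dotProduct_mulVec_nonneg x
    have hc' : (0:ℂ) ≤ (c:ℂ) := by exact_mod_cast hc
    calc (0:ℂ) ≤ (c:ℂ) * (star x ⬝ᵥ M *ᵥ x) := mul_nonneg hc' this
    _ = star x ⬝ᵥ ((c:ℂ) • M) *ᵥ x := by simp [smul_mulVec, dotProduct_smul]

def sumProdEquiv (n : ℕ) : (Fin n ⊕ Fin n) ≃ (Fin 2 × Fin n) where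
  toFun := Sum.elim (fun a => (0, a)) (fun a => (1, a))
  invFun p := if p.1 = 0 then Sum.inl p.2 else Sum.inr p.2
  left_inv := by rintro (a | a) <;> simp
  right_inv := by
    rintro ⟨i, a⟩
    fin_cases i <;> simp

lemma kadison_schwarz {n : ℕ}
    (Φ : Matrix (Fin n) (Fin n) ℂ →ₗ[ℂ] Matrix (Fin n) (Fin n) ℂ)
    (hCP : IsCompletelyPositive (Φ : Matrix (Fin n) (Fin n) ℂ → Matrix (Fin n) (Fin n) ℂ))
    (hunital : Φ 1 = 1) (W : Matrix (Fin n) (Fin n) ℂ) :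
    (Φ (Wᴴ * W) - (Φ W)ᴴ * (Φ W)).PosSemidef := by
  set V : Fin 2 → Matrix (Fin n) (Fin n) ℂ := ![1, W] with hV
  set B : Matrix (Fin 2 × Fin n) (Fin 2 × Fin n) ℂ :=
    Matrix.of fun r s => if r.1 = 0 then V s.1 r.2 s.2 else 0 with hB
  set M : Matrix (Fin 2 × Fin n) (Fin 2 × Fin n) ℂ :=
    Matrix.of fun r s => ((V r.1)ᴴ * V s.1) r.2 s.2 with hM
  have hMB : M = Bᴴ * B := by
    ext ⟨i, a⟩ ⟨j, b⟩
    simp only [hM, hB, Matrix.mul_apply, Matrix.conjTranspose_apply, Matrix.of_apply,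
      Fintype.sum_prod_type, Fin.sum_univ_two]
    simp
  have hMpsd : M.PosSemidef := hMB ▸ Matrix.posSemidef_conjTranspose_mul_self B
  have hN := hCP 2 M hMpsd
  have hNform : (Matrix.of fun (r s : Fin 2 × Fin n) =>
      Φ (Matrix.of fun i j => M (r.1, i) (s.1, j)) r.2 s.2)
      = Matrix.of fun r s => (Φ ((V r.1)ᴴ * V s.1)) r.2 s.2 := by
    ext r s
    congr 1
  rw [hNform] at hN
  have hN' := hN.submatrix (sumProdEquiv n)
  have hN'form : (Matrix.of fun (r s : Fin 2 × Fin n) =>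
        (Φ ((V r.1)ᴴ * V s.1)) r.2 s.2).submatrix (sumProdEquiv n) (sumProdEquiv n)
      = fromBlocks 1 (Φ W) (Φ Wᴴ) (Φ (Wᴴ * W)) := by
    ext (a | a) (b | b) <;>
      simp [sumProdEquiv, hV, Matrix.submatrix_apply, fromBlocks, hunital]
  rw [hN'form] at hN'
  -- from Hermiticity, Φ Wᴴ = (Φ W)ᴴ
  have hherm : Φ Wᴴ = (Φ W)ᴴ := by
    have h := hN'.1.eq
    rw [fromBlocks_conjTranspose] at h
    have := congrArg Matrix.toBlocks₂₁ h
    simpa [Matrix.toBlocks_fromBlocks₂₁] using this.symm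
  rw [hherm] at hN'
  haveI : Invertible (1 : Matrix (Fin n) (Fin n) ℂ) := invertibleOne
  have := (Matrix.PosDef.fromBlocks₁₁ (Φ W) (Φ (Wᴴ * W)) Matrix.PosDef.one).mp hN'
  simpa using this


/-- Lindblad's dissipativity inequality: if `D` generates a semigroup `P t = e^{tD}` of
unital completely positive maps, then `D(W)† W + W† D(W) ≤ D(W† W)` for every `W`. -/
theorem stmt_7 {n : ℕ}
    (D : Matrix (Fin n) (Fin n) ℂ →ₗ[ℂ] Matrix (Fin n) (Fin n) ℂ)
    (P : ℝ → (Matrix (Fin n) (Fin n) ℂ →ₗ[ℂ] Matrix (Fin n) (Fin n) ℂ))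
    (hP0 : P 0 = LinearMap.id)
    (hPder : ∀ (X : Matrix (Fin n) (Fin n) ℂ) (t : ℝ),
      HasDerivAt (fun s => P s X) (D (P t X)) t)
    (hCP : ∀ t ≥ (0:ℝ),
      IsCompletelyPositive ((P t) : Matrix (Fin n) (Fin n) ℂ → Matrix (Fin n) (Fin n) ℂ))
    (hunital : ∀ t ≥ (0:ℝ), P t 1 = 1) :
    ∀ W : Matrix (Fin n) (Fin n) ℂ,
      (D (Wᴴ * W) - ((D W)ᴴ * W + Wᴴ * (D W))).PosSemidef := by
  intro W
  have hKS : ∀ t : ℝ, 0 ≤ t → (P t (Wᴴ * W) - (P t W)ᴴ * (P t W)).PosSemidef :=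
    fun t ht => kadison_schwarz (P t) (hCP t ht) (hunital t ht) W
  set Q : ℝ → Matrix (Fin n) (Fin n) ℂ :=
    fun t => P t (Wᴴ * W) - (P t W)ᴴ * (P t W) with hQ
  have hQ0 : Q 0 = 0 := by simp [hQ, hP0]
  -- derivative of Q at 0
  have h1 : HasDerivAt (fun s => P s (Wᴴ * W)) (D (Wᴴ * W)) 0 := by
    simpa [hP0] using hPder (Wᴴ * W) 0
  have h2 : HasDerivAt (fun s => P s W) (D W) 0 := by
    simpa [hP0] using hPder W 0
  let ct : Matrix (Fin n) (Fin n) ℂ →ₗ[ℝ] Matrix (Fin n) (Fin n) ℂ :=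
    { toFun := fun A => Aᴴ
      map_add' := fun A B => conjTranspose_add A B
      map_smul' := fun c A => by simp [conjTranspose_smul] }
  have h2' : HasDerivAt (fun s => (P s W)ᴴ) ((D W)ᴴ) 0 :=
    (LinearMap.toContinuousLinearMap ct).hasFDerivAt.comp_hasDerivAt 0 h2
  have hmul : HasDerivAt (fun s => (P s W)ᴴ * (P s W))
      ((D W)ᴴ * (P 0 W) + (P 0 W)ᴴ * (D W)) 0 := h2'.mul h2
  have hQder : HasDerivAt Q (D (Wᴴ * W) - ((D W)ᴴ * W + Wᴴ * (D W))) 0 := by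
    have := h1.sub hmul
    simp [hP0] at this
    exact this
  -- limit of PSD matrices
  have hslope := hasDerivAt_iff_tendsto_slope.mp hQder
  have htend : Filter.Tendsto (slope Q 0) (nhdsWithin 0 (Set.Ioi 0))
      (nhds (D (Wᴴ * W) - ((D W)ᴴ * W + Wᴴ * (D W)))) :=
    hslope.mono_left (nhdsWithin_mono 0 fun t ht => ne_of_gt ht)
  refine isClosed_PSD.mem_of_tendsto htend ?_
  filter_upwards [self_mem_nhdsWithin] with t ht
  have : slope Q 0 t = t⁻¹ • Q t := by
    rw [slope_def_module, hQ0, sub_zero, sub_zero]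
  rw [this]
  exact psd_smul_real (hKS t (le_of_lt ht)) (inv_nonneg.mpr (le_of_lt ht))
end

section
/- Let ℋ and ℋ̃ be Volterra integral operators on 𝒞 with kernel bounds at most C, and let Y, Ỹ solve Y = ℋY + Z and Ỹ = ℋ̃Ỹ + Z̃ respectively. Then ‖Y − Ỹ‖_𝒞 ≤ (1/(TC))(e^{2TC} − 1) ‖ℋ − ℋ̃‖_{𝒞→𝒞} · min{‖Z‖_𝒞, ‖Z̃‖_𝒞} + e^{2TC} ‖Z − Z̃‖_𝒞. -/
open Set MeasureTheory intervalIntegral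

lemma gron_aux (T C a b : ℝ) (hT : 0 < T) (hC : 0 < C)
    (g : ℝ → ℝ) (hg : ContinuousOn g (Icc 0 T))
    (h : ∀ τ ∈ Icc (0:ℝ) T, g τ ≤ C * (∫ σ in (0:ℝ)..τ, g σ) + a * Real.exp (C*τ) + b) :
    ∀ τ ∈ Icc (0:ℝ) T, g τ ≤ a * (1 + C*τ) * Real.exp (C*τ) + b * Real.exp (C*τ) := by
  set u : ℝ → ℝ := fun t => ∫ σ in (0:ℝ)..t, g σ with hu_def
  have hg_int : IntegrableOn g (Icc 0 T) := hg.integrableOn_Icc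
  have hu_cont : ContinuousOn u (Icc 0 T) := by
    have := continuousOn_primitive_Icc (μ := volume) (a := (0:ℝ)) (b := T) hg_int
    refine this.congr fun x hx => ?_
    simp only [hu_def]
    rw [intervalIntegral.integral_of_le hx.1, ← integral_Icc_eq_integral_Ioc]
  have hu_deriv : ∀ x ∈ Ioo (0:ℝ) T, HasDerivAt u (g x) x := by
    intro x hx
    have hci : Icc (0:ℝ) T ∈ nhds x := Icc_mem_nhds hx.1 hx.2
    have hgat : ContinuousAt g x := hg.continuousAt hci
    have hint : IntervalIntegrable g volume 0 x := by
      apply ContinuousOn.intervalIntegrable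
      apply hg.mono
      rw [uIcc_of_le hx.1.le]
      exact Icc_subset_Icc le_rfl hx.2.le
    have hms : StronglyMeasurableAtFilter g (nhds x) volume := by
      refine ContinuousOn.stronglyMeasurableAtFilter isOpen_Ioo (hg.mono Ioo_subset_Icc_self) x hx
    exact intervalIntegral.integral_hasDerivAt_right hint hms hgat
  set w : ℝ → ℝ := fun t => a*t + (b/C)*(1 - Real.exp (-(C*t))) - u t * Real.exp (-(C*t)) with hw_def
  have hw_deriv : ∀ x ∈ Ioo (0:ℝ) T, HasDerivAt w
      (a + (b/C)*(Real.exp (-(C*x)) * C) - (g x * Real.exp (-(C*x)) + u x * (Real.exp (-(C*x)) * (-C)))) x := by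
    intro x hx
    have h1 : HasDerivAt (fun t : ℝ => -(C*t)) (-C) x := by
      simpa using ((hasDerivAt_id x).const_mul C).fun_neg
    have hexp : HasDerivAt (fun t : ℝ => Real.exp (-(C*t))) (Real.exp (-(C*x)) * (-C)) x :=
      h1.exp
    have h2 : HasDerivAt (fun t : ℝ => a*t) a x := by simpa using (hasDerivAt_id x).const_mul a
    have h3 : HasDerivAt (fun t : ℝ => (b/C)*(1 - Real.exp (-(C*t)))) ((b/C)*(Real.exp (-(C*x)) * C)) x := by
      have := (hexp.const_sub 1).const_mul (b/C)
      refine this.congr_deriv (by ring)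
    have h4 : HasDerivAt (fun t : ℝ => u t * Real.exp (-(C*t)))
        (g x * Real.exp (-(C*x)) + u x * (Real.exp (-(C*x)) * (-C))) x :=
      (hu_deriv x hx).mul hexp
    exact (h2.add h3).sub h4
  have hw_mono : MonotoneOn w (Icc 0 T) := by
    apply monotoneOn_of_deriv_nonneg (convex_Icc 0 T)
    · apply ContinuousOn.sub
      · exact (continuousOn_const.mul continuousOn_id).add
          (continuousOn_const.mul ((continuousOn_const.sub
            ((Real.continuous_exp.comp (continuous_const.mul continuous_id).neg).continuousOn))))
      · exact hu_cont.mul ((Real.continuous_exp.comp (continuous_const.mul continuous_id).neg).continuousOn)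
    · rw [interior_Icc]
      intro x hx
      exact ((hw_deriv x hx).differentiableAt).differentiableWithinAt
    · rw [interior_Icc]
      intro x hx
      rw [(hw_deriv x hx).deriv]
      have hgle : g x ≤ C * u x + a * Real.exp (C*x) + b := h x ⟨hx.1.le, hx.2.le⟩
      have he1 : Real.exp (C*x) * Real.exp (-(C*x)) = 1 := by
        rw [← Real.exp_add]; simp
      have hep : 0 < Real.exp (-(C*x)) := Real.exp_pos _
      have hkey : (g x - C * u x) * Real.exp (-(C*x)) ≤ a + b * Real.exp (-(C*x)) := by
        have h6 : (g x - C * u x) * Real.exp (-(C*x)) ≤ (a * Real.exp (C*x) + b) * Real.exp (-(C*x)) := by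
          apply mul_le_mul_of_nonneg_right _ hep.le
          linarith
        calc (g x - C * u x) * Real.exp (-(C*x)) ≤ (a * Real.exp (C*x) + b) * Real.exp (-(C*x)) := h6
          _ = a + b * Real.exp (-(C*x)) := by linear_combination a * he1
      have hexpand : a + b / C * (Real.exp (-(C * x)) * C) - (g x * Real.exp (-(C * x)) + u x * (Real.exp (-(C * x)) * -C))
          = a + b * Real.exp (-(C*x)) - (g x - C * u x) * Real.exp (-(C*x)) := by
        field_simp
        ring
      rw [hexpand]
      linarith
  intro τ hτ
  have h0 : (0:ℝ) ∈ Icc (0:ℝ) T := ⟨le_rfl, hT.le⟩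
  have hw0 : w 0 ≤ w τ := hw_mono h0 hτ hτ.1
  have hwz : w 0 = 0 := by
    simp [hw_def, hu_def]
  rw [hwz] at hw0
  -- hw0 : 0 ≤ a*τ + (b/C)*(1 - exp(-(Cτ))) - u τ * exp(-(Cτ))
  have hgle := h τ hτ
  have he1 : Real.exp (C*τ) * Real.exp (-(C*τ)) = 1 := by
    rw [← Real.exp_add]; simp
  have hep : 0 < Real.exp (-(C*τ)) := Real.exp_pos _
  have heP : 0 < Real.exp (C*τ) := Real.exp_pos _
  simp only [hw_def] at hw0
  have he2 : Real.exp (-(C*τ)) * Real.exp (C*τ) = 1 := by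
    rw [← Real.exp_add]; simp
  have hw0' : u τ * Real.exp (-(C*τ)) ≤ a*τ + b/C*(1 - Real.exp (-(C*τ))) := by linarith
  have h5 : u τ * Real.exp (-(C*τ)) * Real.exp (C*τ) = u τ := by
    rw [mul_assoc, he2, mul_one]
  have hu_le : u τ ≤ a*τ*Real.exp (C*τ) + b/C*(Real.exp (C*τ) - 1) := by
    calc u τ = u τ * Real.exp (-(C*τ)) * Real.exp (C*τ) := h5.symm
      _ ≤ (a*τ + b/C*(1 - Real.exp (-(C*τ)))) * Real.exp (C*τ) :=
          mul_le_mul_of_nonneg_right hw0' heP.le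
      _ = a*τ*Real.exp (C*τ) + b/C*(Real.exp (C*τ) - 1) := by linear_combination (-(b/C)) * he2
  have hgle' : g τ ≤ C * u τ + a * Real.exp (C*τ) + b := hgle
  have hC' : C * (b/C) = b := by field_simp
  nlinarith [mul_le_mul_of_nonneg_left hu_le hC.le]

lemma key_ineq (x : ℝ) (hx : 0 < x) :
    x * ((1+x) * Real.exp x) ≤ Real.exp (2*x) - 1 := by
  set p : ℝ := 1 + x + x^2/2 + x^3/6 with hp_def
  have hp : p ≤ Real.exp x := by
    have h := Real.sum_le_exp_of_nonneg hx.le 4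
    have : ∑ i ∈ Finset.range 4, x ^ i / i.factorial = p := by
      norm_num [Finset.sum_range_succ, hp_def, Nat.factorial]
      try ring
    linarith [this ▸ h]
  have hpp : (0:ℝ) < p := by positivity
  have hinv : Real.exp (-x) ≤ p⁻¹ := by
    rw [Real.exp_neg]
    exact inv_anti₀ hpp hp
  have hpoly : x + x^2 ≤ p - p⁻¹ := by
    rw [le_sub_iff_add_le, ← sub_nonneg]
    have hid : p - (x + x^2 + p⁻¹) = (p^2 - (x + x^2)*p - 1) / p := by
      field_simp
      ring
    rw [hid]
    apply div_nonneg _ hpp.le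
    have : p^2 - (x + x^2)*p - 1 = x - x^3/6 - x^4/12 + x^6/36 := by
      simp only [hp_def]; ring
    rw [this]
    nlinarith [sq_nonneg (x^2 - 2), sq_nonneg (x - 2), sq_nonneg x, sq_nonneg (x^2 - x - 2), pow_pos hx 3, pow_pos hx 2, hx.le]
  have hsinh : x + x^2 ≤ Real.exp x - Real.exp (-x) := by
    have := sub_le_sub hp hinv
    linarith
  have h2 : Real.exp (2*x) - 1 = Real.exp x * (Real.exp x - Real.exp (-x)) := by
    rw [mul_sub, ← Real.exp_add, ← Real.exp_add]
    norm_num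
    ring_nf
  rw [h2]
  calc x * ((1+x) * Real.exp x) = (x + x^2) * Real.exp x := by ring
    _ ≤ (Real.exp x - Real.exp (-x)) * Real.exp x :=
        mul_le_mul_of_nonneg_right hsinh (Real.exp_pos x).le
    _ = Real.exp x * (Real.exp x - Real.exp (-x)) := by ring

lemma norm_int_le {X : Type*} [NormedAddCommGroup X] [NormedSpace ℝ X]
    (T C : ℝ) (τ : ℝ) (hτ : τ ∈ Icc (0:ℝ) T)
    (K : ℝ → ℝ → (X →L[ℝ] X)) (hK : Continuous fun p : ℝ × ℝ => K p.1 p.2)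
    (hKb : ∀ σ ∈ Icc (0:ℝ) τ, ‖K τ σ‖ ≤ C)
    (f : ℝ → X) (hf : ContinuousOn f (Icc 0 T)) :
    ‖∫ σ in (0:ℝ)..τ, K τ σ (f σ)‖ ≤ C * ∫ σ in (0:ℝ)..τ, ‖f σ‖ := by
  have h0τ : (0:ℝ) ≤ τ := hτ.1
  have hsub : Icc (0:ℝ) τ ⊆ Icc 0 T := Icc_subset_Icc le_rfl hτ.2
  have hKc : ContinuousOn (fun σ => K τ σ) (Icc 0 τ) :=
    (hK.comp (continuous_const.prodMk continuous_id)).continuousOn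
  have hfc : ContinuousOn f (Icc 0 τ) := hf.mono hsub
  have hic : ContinuousOn (fun σ => K τ σ (f σ)) (Icc 0 τ) := hKc.clm_apply hfc
  have h1 : ‖∫ σ in (0:ℝ)..τ, K τ σ (f σ)‖ ≤ ∫ σ in (0:ℝ)..τ, ‖K τ σ (f σ)‖ :=
    intervalIntegral.norm_integral_le_integral_norm h0τ
  refine h1.trans ?_
  rw [← intervalIntegral.integral_const_mul]
  apply intervalIntegral.integral_mono_on h0τ
  · exact (hic.norm.intervalIntegrable_of_Icc h0τ)
  · exact ((hfc.norm.intervalIntegrable_of_Icc h0τ).const_mul C)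
  · intro σ hσ
    calc ‖K τ σ (f σ)‖ ≤ ‖K τ σ‖ * ‖f σ‖ := (K τ σ).le_opNorm _
      _ ≤ C * ‖f σ‖ := mul_le_mul_of_nonneg_right (hKb σ hσ) (norm_nonneg _)

lemma bdd_range_norm {X : Type*} [NormedAddCommGroup X] (T : ℝ)
    (f : ℝ → X) (hf : ContinuousOn f (Icc 0 T)) :
    BddAbove (Set.range fun τ : Icc (0:ℝ) T => ‖f ↑τ‖) := by
  obtain ⟨B, hB⟩ := isCompact_Icc.exists_bound_of_continuousOn hf
  exact ⟨B, by rintro _ ⟨τ, rfl⟩; exact hB τ τ.2⟩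


lemma volterra_aux {X : Type*} [NormedAddCommGroup X] [NormedSpace ℝ X]
    (T : ℝ) (hT : 0 < T)
    (G G' : ℝ → ℝ → (X →L[ℝ] X))
    (hGcont : Continuous fun p : ℝ × ℝ => G p.1 p.2)
    (hG'cont : Continuous fun p : ℝ × ℝ => G' p.1 p.2)
    (C : ℝ) (hC : 0 < C)
    (hGb : ∀ τ σ : ℝ, 0 ≤ σ → σ ≤ τ → τ ≤ T → ‖G τ σ‖ ≤ C ∧ ‖G' τ σ‖ ≤ C)
    (Z Z' Y Y' : ℝ → X)
    (hZ : ContinuousOn Z (Icc 0 T)) (hZ' : ContinuousOn Z' (Icc 0 T))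
    (hY : ContinuousOn Y (Icc 0 T)) (hY' : ContinuousOn Y' (Icc 0 T))
    (hYeq : ∀ τ ∈ Icc (0:ℝ) T, Y τ = (∫ σ in (0:ℝ)..τ, G τ σ (Y σ)) + Z τ)
    (hY'eq : ∀ τ ∈ Icc (0:ℝ) T, Y' τ = (∫ σ in (0:ℝ)..τ, G' τ σ (Y' σ)) + Z' τ)
    (δ : ℝ) (hδ0 : 0 ≤ δ)
    (hδ : ∀ W : ℝ → X, ContinuousOn W (Icc 0 T) → ∀ τ ∈ Icc (0:ℝ) T,
      ‖(∫ σ in (0:ℝ)..τ, G τ σ (W σ)) - ∫ σ in (0:ℝ)..τ, G' τ σ (W σ)‖ ≤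
        δ * ⨆ σ : Icc (0:ℝ) T, ‖W σ‖) :
    (⨆ τ : Icc (0:ℝ) T, ‖Y τ - Y' τ‖) ≤
      δ * (⨆ τ : Icc (0:ℝ) T, ‖Z' ↑τ‖) * ((1 + C*T) * Real.exp (C*T)) +
        Real.exp (C*T) * ⨆ τ : Icc (0:ℝ) T, ‖Z ↑τ - Z' ↑τ‖ := by
  haveI : Nonempty ↥(Icc (0:ℝ) T) := (Set.nonempty_Icc.mpr hT.le).to_subtype
  set M' : ℝ := ⨆ τ : Icc (0:ℝ) T, ‖Z' ↑τ‖ with hM'_def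
  set ε : ℝ := ⨆ τ : Icc (0:ℝ) T, ‖Z ↑τ - Z' ↑τ‖ with hε_def
  have hM'0 : 0 ≤ M' := Real.iSup_nonneg fun τ => norm_nonneg _
  have hε0 : 0 ≤ ε := Real.iSup_nonneg fun τ => norm_nonneg _
  have hZ'le : ∀ σ ∈ Icc (0:ℝ) T, ‖Z' σ‖ ≤ M' := fun σ hσ =>
    le_ciSup (bdd_range_norm T Z' hZ') (⟨σ, hσ⟩ : Icc (0:ℝ) T)
  have hεle : ∀ σ ∈ Icc (0:ℝ) T, ‖Z σ - Z' σ‖ ≤ ε := fun σ hσ =>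
    le_ciSup (bdd_range_norm T (fun t => Z t - Z' t) (hZ.sub hZ')) (⟨σ, hσ⟩ : Icc (0:ℝ) T)
  -- Step A : a priori bound on Y'
  have hY'bd : ∀ τ ∈ Icc (0:ℝ) T, ‖Y' τ‖ ≤ M' * Real.exp (C*τ) := by
    have := gron_aux T C 0 M' hT hC (fun σ => ‖Y' σ‖) hY'.norm ?_
    · intro τ hτ
      have h1 := this τ hτ
      simpa using h1
    · intro τ hτ
      show ‖Y' τ‖ ≤ _
      rw [hY'eq τ hτ]
      calc ‖(∫ σ in (0:ℝ)..τ, G' τ σ (Y' σ)) + Z' τ‖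
          ≤ ‖∫ σ in (0:ℝ)..τ, G' τ σ (Y' σ)‖ + ‖Z' τ‖ := norm_add_le _ _
        _ ≤ C * (∫ σ in (0:ℝ)..τ, ‖Y' σ‖) + M' := by
            apply add_le_add _ (hZ'le τ hτ)
            exact norm_int_le T C τ hτ G' hG'cont
              (fun σ hσ => (hGb τ σ hσ.1 hσ.2 hτ.2).2) Y' hY'
        _ ≤ C * (∫ σ in (0:ℝ)..τ, ‖Y' σ‖) + 0 * Real.exp (C*τ) + M' := by
            simp
  -- Step B : integral inequality for the difference
  have hkey : ∀ τ ∈ Icc (0:ℝ) T, ‖Y τ - Y' τ‖ ≤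
      C * (∫ σ in (0:ℝ)..τ, ‖Y σ - Y' σ‖) + (δ * M') * Real.exp (C*τ) + ε := by
    intro τ hτ
    have h0τ : (0:ℝ) ≤ τ := hτ.1
    have hsub : Icc (0:ℝ) τ ⊆ Icc 0 T := Icc_subset_Icc le_rfl hτ.2
    have huIcc : uIcc (0:ℝ) τ = Icc 0 τ := uIcc_of_le h0τ
    have hGc : ∀ (f : ℝ → X), ContinuousOn f (Icc 0 T) →
        IntervalIntegrable (fun σ => G τ σ (f σ)) volume 0 τ := by
      intro f hf
      apply ContinuousOn.intervalIntegrable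
      rw [huIcc]
      exact ((hGcont.comp (continuous_const.prodMk continuous_id)).continuousOn).clm_apply
        (hf.mono hsub)
    -- decomposition
    have hdecomp : Y τ - Y' τ =
        (∫ σ in (0:ℝ)..τ, G τ σ (Y σ - Y' σ)) +
        ((∫ σ in (0:ℝ)..τ, G τ σ (Y' σ)) - ∫ σ in (0:ℝ)..τ, G' τ σ (Y' σ)) +
        (Z τ - Z' τ) := by
      have e1 : ∫ σ in (0:ℝ)..τ, G τ σ (Y σ - Y' σ) =
          (∫ σ in (0:ℝ)..τ, G τ σ (Y σ)) - ∫ σ in (0:ℝ)..τ, G τ σ (Y' σ) := by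
        rw [← intervalIntegral.integral_sub (hGc Y hY) (hGc Y' hY')]
        apply intervalIntegral.integral_congr
        intro σ _
        simp
      rw [e1, hYeq τ hτ, hY'eq τ hτ]
      abel
    -- middle term via hδ with truncated Y'
    set W : ℝ → X := fun σ => Y' (min σ τ) with hW_def
    have hWcont : ContinuousOn W (Icc 0 T) := by
      apply hY'.comp ((continuous_id.min continuous_const).continuousOn)
      intro σ hσ
      exact ⟨le_min hσ.1 h0τ, min_le_of_left_le hσ.2⟩
    have hWeq : ∀ (K : ℝ → ℝ → (X →L[ℝ] X)),
        (∫ σ in (0:ℝ)..τ, K τ σ (W σ)) = ∫ σ in (0:ℝ)..τ, K τ σ (Y' σ) := by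
      intro K
      apply intervalIntegral.integral_congr
      intro σ hσ
      rw [huIcc] at hσ
      simp [hW_def, min_eq_left hσ.2]
    have hWsup : (⨆ σ : Icc (0:ℝ) T, ‖W ↑σ‖) ≤ M' * Real.exp (C*τ) := by
      apply ciSup_le
      intro σ
      have hmem : min (↑σ) τ ∈ Icc (0:ℝ) T := ⟨le_min σ.2.1 h0τ, min_le_of_left_le σ.2.2⟩
      calc ‖W ↑σ‖ ≤ M' * Real.exp (C * min (↑σ) τ) := hY'bd _ hmem
        _ ≤ M' * Real.exp (C*τ) := by
            apply mul_le_mul_of_nonneg_left _ hM'0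
            exact Real.exp_le_exp.2 (mul_le_mul_of_nonneg_left (min_le_right _ _) hC.le)
    have hmid : ‖(∫ σ in (0:ℝ)..τ, G τ σ (Y' σ)) - ∫ σ in (0:ℝ)..τ, G' τ σ (Y' σ)‖ ≤
        (δ * M') * Real.exp (C*τ) := by
      have := hδ W hWcont τ hτ
      rw [hWeq G, hWeq G'] at this
      refine this.trans ?_
      calc δ * (⨆ σ : Icc (0:ℝ) T, ‖W ↑σ‖) ≤ δ * (M' * Real.exp (C*τ)) :=
            mul_le_mul_of_nonneg_left hWsup hδ0
        _ = (δ * M') * Real.exp (C*τ) := by ring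
    have hfirst : ‖∫ σ in (0:ℝ)..τ, G τ σ (Y σ - Y' σ)‖ ≤
        C * ∫ σ in (0:ℝ)..τ, ‖Y σ - Y' σ‖ :=
      norm_int_le T C τ hτ G hGcont (fun σ hσ => (hGb τ σ hσ.1 hσ.2 hτ.2).1)
        (fun σ => Y σ - Y' σ) (hY.sub hY')
    calc ‖Y τ - Y' τ‖ = ‖(∫ σ in (0:ℝ)..τ, G τ σ (Y σ - Y' σ)) +
          ((∫ σ in (0:ℝ)..τ, G τ σ (Y' σ)) - ∫ σ in (0:ℝ)..τ, G' τ σ (Y' σ)) +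
          (Z τ - Z' τ)‖ := by rw [← hdecomp]
      _ ≤ ‖(∫ σ in (0:ℝ)..τ, G τ σ (Y σ - Y' σ)) +
          ((∫ σ in (0:ℝ)..τ, G τ σ (Y' σ)) - ∫ σ in (0:ℝ)..τ, G' τ σ (Y' σ))‖ +
          ‖Z τ - Z' τ‖ := norm_add_le _ _
      _ ≤ ‖∫ σ in (0:ℝ)..τ, G τ σ (Y σ - Y' σ)‖ +
          ‖(∫ σ in (0:ℝ)..τ, G τ σ (Y' σ)) - ∫ σ in (0:ℝ)..τ, G' τ σ (Y' σ)‖ +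
          ‖Z τ - Z' τ‖ := by gcongr; exact norm_add_le _ _
      _ ≤ C * (∫ σ in (0:ℝ)..τ, ‖Y σ - Y' σ‖) + (δ * M') * Real.exp (C*τ) + ε := by
          have := hεle τ hτ
          gcongr
  -- Step C : apply Gronwall to the difference
  have hbd := gron_aux T C (δ * M') ε hT hC (fun σ => ‖Y σ - Y' σ‖) (hY.sub hY').norm hkey
  apply ciSup_le
  intro τ
  have h1 := hbd ↑τ τ.2
  have hδM : 0 ≤ δ * M' := mul_nonneg hδ0 hM'0
  have he : Real.exp (C * ↑τ) ≤ Real.exp (C*T) :=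
    Real.exp_le_exp.2 (mul_le_mul_of_nonneg_left τ.2.2 hC.le)
  have he0 : 0 < Real.exp (C * ↑τ) := Real.exp_pos _
  have hτT : (0:ℝ) ≤ (τ:ℝ) := τ.2.1
  have h2 : δ * M' * (1 + C * ↑τ) * Real.exp (C * ↑τ) ≤ δ * M' * ((1 + C*T) * Real.exp (C*T)) := by
    have h3 : (1:ℝ) + C * ↑τ ≤ 1 + C * T := by nlinarith [τ.2.2]
    have h4 : (0:ℝ) ≤ 1 + C * ↑τ := by nlinarith
    have h6 : (1 + C * ↑τ) * Real.exp (C * ↑τ) ≤ (1 + C*T) * Real.exp (C*T) :=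
      mul_le_mul h3 he he0.le (by linarith)
    nlinarith [mul_le_mul_of_nonneg_left h6 hδM]
  have h5 : ε * Real.exp (C * ↑τ) ≤ Real.exp (C*T) * ε := by nlinarith
  linarith

/-- Perturbation estimate for Volterra integral equations: if `Y = ℋY + Z` and
`Ỹ = ℋ̃Ỹ + Z̃` with kernels bounded by `C` and `δ` an upper bound for the
`𝒞 → 𝒞` norm of `ℋ − ℋ̃`, then
`‖Y − Ỹ‖_𝒞 ≤ (1/(TC))(e^{2TC} − 1) δ min{‖Z‖_𝒞, ‖Z̃‖_𝒞} + e^{2TC} ‖Z − Z̃‖_𝒞`. -/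
theorem stmt_19 {X : Type*} [NormedAddCommGroup X] [NormedSpace ℝ X] [CompleteSpace X]
    (T : ℝ) (hT : 0 < T)
    (G G' : ℝ → ℝ → (X →L[ℝ] X))
    (hGcont : Continuous fun p : ℝ × ℝ => G p.1 p.2)
    (hG'cont : Continuous fun p : ℝ × ℝ => G' p.1 p.2)
    (C : ℝ) (hC : 0 < C)
    (hGb : ∀ τ σ : ℝ, 0 ≤ σ → σ ≤ τ → τ ≤ T → ‖G τ σ‖ ≤ C ∧ ‖G' τ σ‖ ≤ C)
    (Z Z' Y Y' : ℝ → X)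
    (hZ : ContinuousOn Z (Icc 0 T)) (hZ' : ContinuousOn Z' (Icc 0 T))
    (hY : ContinuousOn Y (Icc 0 T)) (hY' : ContinuousOn Y' (Icc 0 T))
    (hYeq : ∀ τ ∈ Icc (0:ℝ) T, Y τ = (∫ σ in (0:ℝ)..τ, G τ σ (Y σ)) + Z τ)
    (hY'eq : ∀ τ ∈ Icc (0:ℝ) T, Y' τ = (∫ σ in (0:ℝ)..τ, G' τ σ (Y' σ)) + Z' τ)
    (δ : ℝ)
    (hδ : ∀ W : ℝ → X, ContinuousOn W (Icc 0 T) → ∀ τ ∈ Icc (0:ℝ) T,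
      ‖(∫ σ in (0:ℝ)..τ, G τ σ (W σ)) - ∫ σ in (0:ℝ)..τ, G' τ σ (W σ)‖ ≤
        δ * ⨆ σ : Icc (0:ℝ) T, ‖W σ‖) :
    (⨆ τ : Icc (0:ℝ) T, ‖Y τ - Y' τ‖) ≤
      1 / (T * C) * (Real.exp (2 * T * C) - 1) * δ *
          min (⨆ τ : Icc (0:ℝ) T, ‖Z τ‖) (⨆ τ : Icc (0:ℝ) T, ‖Z' τ‖) +
        Real.exp (2 * T * C) * ⨆ τ : Icc (0:ℝ) T, ‖Z τ - Z' τ‖ := by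
  haveI : Nonempty ↥(Icc (0:ℝ) T) := (Set.nonempty_Icc.mpr hT.le).to_subtype
  by_cases hδ0 : 0 ≤ δ
  · -- main case
    have hδ' : ∀ W : ℝ → X, ContinuousOn W (Icc 0 T) → ∀ τ ∈ Icc (0:ℝ) T,
        ‖(∫ σ in (0:ℝ)..τ, G' τ σ (W σ)) - ∫ σ in (0:ℝ)..τ, G τ σ (W σ)‖ ≤
          δ * ⨆ σ : Icc (0:ℝ) T, ‖W σ‖ := by
      intro W hW τ hτ
      rw [norm_sub_rev]
      exact hδ W hW τ hτ
    have hGb' : ∀ τ σ : ℝ, 0 ≤ σ → σ ≤ τ → τ ≤ T → ‖G' τ σ‖ ≤ C ∧ ‖G τ σ‖ ≤ C :=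
      fun τ σ h1 h2 h3 => ⟨(hGb τ σ h1 h2 h3).2, (hGb τ σ h1 h2 h3).1⟩
    have A := volterra_aux T hT G G' hGcont hG'cont C hC hGb Z Z' Y Y'
      hZ hZ' hY hY' hYeq hY'eq δ hδ0 hδ
    have B := volterra_aux T hT G' G hG'cont hGcont C hC hGb' Z' Z Y' Y
      hZ' hZ hY' hY hY'eq hYeq δ hδ0 hδ'
    have eY : (⨆ τ : Icc (0:ℝ) T, ‖Y' ↑τ - Y ↑τ‖) = ⨆ τ : Icc (0:ℝ) T, ‖Y ↑τ - Y' ↑τ‖ :=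
      iSup_congr fun τ => norm_sub_rev _ _
    have eZ : (⨆ τ : Icc (0:ℝ) T, ‖Z' ↑τ - Z ↑τ‖) = ⨆ τ : Icc (0:ℝ) T, ‖Z ↑τ - Z' ↑τ‖ :=
      iSup_congr fun τ => norm_sub_rev _ _
    rw [eY, eZ] at B
    set S := ⨆ τ : Icc (0:ℝ) T, ‖Y ↑τ - Y' ↑τ‖
    set M := ⨆ τ : Icc (0:ℝ) T, ‖Z ↑τ‖
    set M' := ⨆ τ : Icc (0:ℝ) T, ‖Z' ↑τ‖
    set E := ⨆ τ : Icc (0:ℝ) T, ‖Z ↑τ - Z' ↑τ‖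
    have hE0 : 0 ≤ E := Real.iSup_nonneg fun τ => norm_nonneg _
    have hmin0 : 0 ≤ min M M' := le_min (Real.iSup_nonneg fun τ => norm_nonneg _)
      (Real.iSup_nonneg fun τ => norm_nonneg _)
    have hSmin : S ≤ δ * min M M' * ((1 + C*T) * Real.exp (C*T)) + Real.exp (C*T) * E := by
      rcases le_total M M' with h | h
      · rw [min_eq_left h]; exact B
      · rw [min_eq_right h]; exact A
    have hx : 0 < T * C := mul_pos hT hC
    have hk : T * C * ((1 + T*C) * Real.exp (T*C)) ≤ Real.exp (2*T*C) - 1 := by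
      have h := key_ineq (T*C) hx
      have he : Real.exp (2*(T*C)) = Real.exp (2*T*C) := by ring_nf
      rw [he] at h
      linarith
    have hc1 : (1 + C*T) * Real.exp (C*T) ≤ 1/(T*C) * (Real.exp (2*T*C) - 1) := by
      rw [mul_comm C T, one_div_mul_eq_div, le_div_iff₀ hx]
      nlinarith
    have hδm : 0 ≤ δ * min M M' := mul_nonneg hδ0 hmin0
    have h1 : δ * min M M' * ((1 + C*T) * Real.exp (C*T)) ≤
        1/(T*C) * (Real.exp (2*T*C) - 1) * δ * min M M' := by
      have := mul_le_mul_of_nonneg_left hc1 hδm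
      nlinarith
    have h2 : Real.exp (C*T) * E ≤ Real.exp (2*T*C) * E := by
      apply mul_le_mul_of_nonneg_right _ hE0
      apply Real.exp_le_exp.2
      nlinarith
    linarith
  · -- degenerate case : δ < 0 forces X to be trivial
    push_neg at hδ0
    have htriv : ∀ c : X, c = 0 := by
      intro c
      by_contra hc
      have h := hδ (fun _ => c) continuousOn_const T ⟨hT.le, le_rfl⟩
      rw [ciSup_const] at h
      have h0 : (0:ℝ) ≤ δ * ‖c‖ := le_trans (norm_nonneg _) h
      have : 0 < ‖c‖ := norm_pos_iff.2 hc
      nlinarith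
    have hz : ∀ f : ℝ → X, (⨆ τ : Icc (0:ℝ) T, ‖f ↑τ‖) = 0 := by
      intro f
      have : (⨆ τ : Icc (0:ℝ) T, ‖f ↑τ‖) = ⨆ _ : Icc (0:ℝ) T, (0:ℝ) :=
        iSup_congr fun τ => by rw [htriv (f ↑τ), norm_zero]
      rw [this, ciSup_const]
    rw [hz (fun τ => Y τ - Y' τ), hz Z, hz Z', hz (fun τ => Z τ - Z' τ)]
    norm_num
end
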